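/- Let S be a nonempty set, let f : S → ℝ and g : S → ℝ with g(x) > 0 for all x ∈ S, and suppose x* ∈ S attains the maximum of f/g over S. Let β* = f(x*)/g(x*) and suppose the set {f(x) − β*·g(x) : x ∈ S} is bounded above. Then F(β*) = sup_{x ∈ S} (f(x) − β*·g(x)) = 0; i.e., the optimal value of the fractional program is the root of the Dinkelbach function F. -/

import Mathlib

/-- **The optimal ratio is the root of the Dinkelbach function:** if `x*` maximizes
`f/g` over `S`, `β* = f(x*)/g(x*)`, and `{f(x) − β*·g(x) : x ∈ S}` is bounded above,
then `F(β*) = sup_{x ∈ S} (f(x) − β*·g(x)) = 0`. -/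
theorem stmt_14 {α : Type*} [Nonempty α] (f g : α → ℝ) (hg : ∀ x, 0 < g x)
    (xs : α) (hmax : ∀ x, f x / g x ≤ f xs / g xs)
    (βs : ℝ) (hβs : βs = f xs / g xs)
    (hbdd : BddAbove (Set.range fun x => f x - βs * g x)) :
    (⨆ x, (f x - βs * g x)) = 0 := by
  apply le_antisymm
  · apply ciSup_le
    intro x
    have := hmax x
    rw [div_le_div_iff₀ (hg x) (hg xs)] at this
    have hβ : f x ≤ βs * g x := by
      rw [hβs, div_mul_eq_mul_div, le_div_iff₀ (hg xs)]
      linarith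
    linarith
  · have h0 : f xs - βs * g xs = 0 := by
      rw [hβs, div_mul_cancel₀ _ (hg xs).ne', sub_self]
    calc (0:ℝ) = f xs - βs * g xs := h0.symm
    _ ≤ ⨆ x, (f x - βs * g x) := le_ciSup hbdd xs
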